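/- Let c ∈ ℚ⟦X⟧ be the Catalan generating function, the unique power series with c = 1 + X·c², and let a(n) = [X^n] (c · (2 - c²)⁻¹) denote the coefficients of the row-sum generating function of the Riordan array (c, c² - 1). Define b : ℕ → ℚ by b(0) = 1, b(1) = 4, and b(n+2) = 4·b(n+1) - b(n) (so b has generating function 1/(1-4x+x²)). Then for every n ≥ 0, the Hankel determinant det( (a(i+j))_{0 ≤ i,j ≤ n} ) equals b(n). -/

import Mathlib

open PowerSeries Finset

/-- The sequence with generating function `1/(1-4x+x²)`: `b 0 = 1`, `b 1 = 4`,
`b (n+2) = 4·b (n+1) - b n` (OEIS A001353 shifted). -/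
def hankelB : ℕ → ℚ
  | 0 => 1
  | 1 => 4
  | n + 2 => 4 * hankelB (n + 1) - hankelB n


namespace Stmt17

lemma hankelB_rec (n : ℕ) : hankelB (n+2) = 4 * hankelB (n+1) - hankelB n := rfl

lemma hankelB_pos (n : ℕ) : 0 < hankelB n ∧ hankelB n ≤ hankelB (n+1) := by
  induction n with
  | zero => norm_num [hankelB]
  | succ n ih =>
    rw [hankelB_rec]
    constructor <;> nlinarith [ih.1, ih.2]

lemma hankelB_ne (n : ℕ) : hankelB n ≠ 0 := ne_of_gt (hankelB_pos n).1

def TT : ℕ → ℕ → ℚ := fun k l =>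
  if k = l then (if k = 0 then 1 else 4)
  else if k = l + 1 then (if 1 ≤ l then 1 else 0)
  else if l = k + 1 then (if 1 ≤ k then 1 else 0) else 0

lemma TT_symm (k l : ℕ) : TT k l = TT l k := by
  unfold TT; split_ifs <;> first | rfl | omega | exact ‹False›.elim

lemma TT_zero_left (l : ℕ) : TT 0 l = if l = 0 then 1 else 0 := by
  unfold TT; split_ifs <;> first | rfl | omega | exact ‹False›.elim

lemma TT_eq_diag (k l : ℕ) (h : k = l) (h0 : 1 ≤ k) : TT k l = 4 := by
  unfold TT; split_ifs <;> first | rfl | omega | exact ‹False›.elim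

lemma TT_eq_down (k l : ℕ) (h : k = l + 1) (h0 : 1 ≤ l) : TT k l = 1 := by
  unfold TT; split_ifs <;> first | rfl | omega | exact ‹False›.elim

lemma TT_eq_up (k l : ℕ) (h : l = k + 1) (h0 : 1 ≤ k) : TT k l = 1 := by
  unfold TT; split_ifs <;> first | rfl | omega | exact ‹False›.elim

lemma TT_far (k l : ℕ) (h1 : k ≠ l) (h2 : k ≠ l + 1) (h3 : l ≠ k + 1) : TT k l = 0 := by
  unfold TT; split_ifs <;> first | rfl | omega | exact ‹False›.elim

def R0 : ℕ → ℚ := fun m => if m = 0 then 3 else if m = 1 then 4 else if m = 2 then 1 else 0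

lemma R0_big (m : ℕ) (h : 3 ≤ m) : R0 m = 0 := by
  unfold R0; split_ifs <;> first | rfl | omega | exact ‹False›.elim

def NN : ℕ → ℕ → ℚ := fun m l =>
  R0 m * TT 0 l + TT (m+1) l + (if 1 ≤ m then 2 * TT m l else 0)
    + (if 2 ≤ m then TT (m-1) l else 0)

lemma NN_val3 (t l : ℕ) : NN (t+3) l = TT (t+4) l + 2 * TT (t+3) l + TT (t+2) l := by
  show R0 (t+3) * TT 0 l + TT (t+4) l + _ + _ = _
  rw [R0_big _ (by omega), if_pos (by omega : 1 ≤ t+3), if_pos (by omega : 2 ≤ t+3),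
    show t+3-1 = t+2 from rfl]
  ring

lemma NN_far (m l : ℕ) (h : m + 3 ≤ l) : NN m l = 0 := by
  show R0 m * TT 0 l + TT (m+1) l + _ + _ = 0
  rw [TT_zero_left, if_neg (by omega : ¬ l = 0),
    TT_far (m+1) l (by omega) (by omega) (by omega),
    TT_far m l (by omega) (by omega) (by omega),
    TT_far (m-1) l (by omega) (by omega) (by omega)]
  split_ifs <;> norm_num

lemma NN_far' (m l : ℕ) (h : l + 3 ≤ m) : NN m l = 0 := by
  show R0 m * TT 0 l + TT (m+1) l + _ + _ = 0
  rw [R0_big _ (by omega),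
    TT_far (m+1) l (by omega) (by omega) (by omega),
    TT_far m l (by omega) (by omega) (by omega),
    TT_far (m-1) l (by omega) (by omega) (by omega)]
  split_ifs <;> norm_num

lemma NN_pent (m l : ℕ) (h : m ≤ l) :
    TT (m+4) (l+3) + 2 * TT (m+3) (l+3) + TT (m+2) (l+3)
      = TT (l+4) (m+3) + 2 * TT (l+3) (m+3) + TT (l+2) (m+3) := by
  rcases (by omega : l = m ∨ l = m + 1 ∨ l = m + 2 ∨ m + 3 ≤ l) with rfl | rfl | rfl | hl
  · rfl
  · rw [TT_eq_diag (m+4) (m+4) rfl (by omega), TT_eq_up (m+3) (m+4) rfl (by omega),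
      TT_far (m+2) (m+4) (by omega) (by omega) (by omega),
      TT_far (m+5) (m+3) (by omega) (by omega) (by omega),
      TT_eq_down (m+4) (m+3) rfl (by omega), TT_eq_diag (m+3) (m+3) rfl (by omega)]
    ring
  · rw [TT_eq_up (m+4) (m+5) rfl (by omega),
      TT_far (m+3) (m+5) (by omega) (by omega) (by omega),
      TT_far (m+2) (m+5) (by omega) (by omega) (by omega),
      TT_far (m+6) (m+3) (by omega) (by omega) (by omega),
      TT_far (m+5) (m+3) (by omega) (by omega) (by omega),
      TT_eq_down (m+4) (m+3) rfl (by omega)]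
    ring
  · rw [TT_far (m+4) (l+3) (by omega) (by omega) (by omega),
      TT_far (m+3) (l+3) (by omega) (by omega) (by omega),
      TT_far (m+2) (l+3) (by omega) (by omega) (by omega),
      TT_far (l+4) (m+3) (by omega) (by omega) (by omega),
      TT_far (l+3) (m+3) (by omega) (by omega) (by omega),
      TT_far (l+2) (m+3) (by omega) (by omega) (by omega)]

lemma NN_symm_aux (m l : ℕ) (hm : m ≤ 2) : NN m l = NN l m := by
  rcases Nat.lt_or_ge l 3 with hl | hl
  · interval_cases m <;> interval_cases l <;> norm_num [NN, TT, R0]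
  obtain ⟨s, rfl⟩ : ∃ s, l = s + 3 := ⟨l - 3, by omega⟩
  · rcases (by omega : m ≤ s ∨ s < m) with hs | hs
    · rw [NN_far m (s+3) (by omega), NN_far' (s+3) m (by omega)]
    · interval_cases m <;> interval_cases s <;> norm_num [NN, TT, R0]

lemma NN_symm (m l : ℕ) : NN m l = NN l m := by
  rcases Nat.lt_or_ge m 3 with hm | hm
  · exact NN_symm_aux m l (by omega)
  obtain ⟨t, rfl⟩ : ∃ t, m = t + 3 := ⟨m - 3, by omega⟩
  rcases Nat.lt_or_ge l 3 with hl | hl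
  · exact (NN_symm_aux l (t+3) (by omega)).symm
  obtain ⟨s, rfl⟩ : ∃ s, l = s + 3 := ⟨l - 3, by omega⟩
  rw [NN_val3, NN_val3]
  rcases le_total t s with h | h
  · exact NN_pent t s h
  · exact (NN_pent s t h).symm



variable {c : PowerSeries ℚ}

/-- `G i k = [X^i] (Xc²)^k · (c(2-c²)⁻¹)`. -/
noncomputable def Gf (c : PowerSeries ℚ) (i k : ℕ) : ℚ :=
  coeff i ((X * c^2)^k * (c * (2 - c^2)⁻¹))

lemma constC (hc : c = 1 + X * c ^ 2) : constantCoeff c = 1 := by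
  have := congrArg (constantCoeff (R := ℚ)) hc
  simpa using this

lemma const2 (hc : c = 1 + X * c ^ 2) : constantCoeff (2 - c^2) = 1 := by
  have h := constC hc
  rw [map_sub, map_pow, h, map_ofNat]
  norm_num

lemma constA (hc : c = 1 + X * c ^ 2) : constantCoeff (c * (2 - c^2)⁻¹) = 1 := by
  rw [map_mul, constC hc, PowerSeries.constantCoeff_inv, const2 hc]
  norm_num

lemma Gf_zero (i k : ℕ) (h : i < k) : Gf c i k = 0 := by
  unfold Gf
  have hdvd : (X : PowerSeries ℚ)^k ∣ (X * c^2)^k * (c * (2 - c^2)⁻¹) :=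
    ⟨(c^2)^k * (c * (2 - c^2)⁻¹), by rw [mul_pow]; ring⟩
  exact PowerSeries.X_pow_dvd_iff.mp hdvd i h

lemma Gf_diag (hc : c = 1 + X * c ^ 2) (i : ℕ) : Gf c i i = 1 := by
  unfold Gf
  have h1 : (X * c^2)^i * (c * (2 - c^2)⁻¹) = X^i * ((c^2)^i * (c * (2 - c^2)⁻¹)) := by
    rw [mul_pow]; ring
  rw [h1]
  have h2 := PowerSeries.coeff_X_pow_mul ((c^2)^i * (c * (2 - c^2)⁻¹)) i 0
  rw [zero_add] at h2
  rw [h2, PowerSeries.coeff_zero_eq_constantCoeff, map_mul, map_pow, map_pow, constC hc,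
    constA hc]
  norm_num

lemma Gf_rowk (hc : c = 1 + X * c ^ 2) (i k : ℕ) :
    Gf c (i+1) (k+1) = Gf c i k + 2 * Gf c i (k+1) + Gf c i (k+2) := by
  set A := c * (2 - c^2)⁻¹ with hA
  have key : (X*c^2)^(k+1) * A
      = X * ((X*c^2)^k*A + ((X*c^2)^(k+1)*A + (X*c^2)^(k+1)*A) + (X*c^2)^(k+2)*A) := by
    linear_combination (X * (X*c^2)^k * A * (c + 1 + X*c^2)) * hc
  unfold Gf
  rw [← hA]
  conv_lhs => rw [key]
  rw [PowerSeries.coeff_succ_X_mul]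
  simp only [map_add]
  ring

lemma Gf_row0 (hc : c = 1 + X * c ^ 2) (i : ℕ) :
    Gf c (i+1) 0 = 3 * Gf c i 0 + 4 * Gf c i 1 + Gf c i 2 := by
  set A := c * (2 - c^2)⁻¹ with hA
  have h2 : (2 - c^2) * A = c := by
    rw [hA, ← mul_assoc, mul_comm (2 - c^2) c, mul_assoc,
      PowerSeries.mul_inv_cancel _ (by rw [const2 hc]; norm_num), mul_one]
  have hP : c * (1 - 3*X - 4*X^2*c^2 - X^3*c^4) = 2 - c^2 := by
    linear_combination (X^2*c^3 + X*c^2 + 3*X*c + c + 2) * hc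
  have E2 : A * (1 - 3*X - 4*X^2*c^2 - X^3*c^4) = 1 := by
    have h3 : (2 - c^2) * (A * (1 - 3*X - 4*X^2*c^2 - X^3*c^4)) = (2 - c^2) * 1 := by
      rw [mul_one, ← mul_assoc, h2, hP]
    have hu : IsUnit (2 - c^2 : PowerSeries ℚ) := by
      apply IsUnit.of_mul_eq_one (2 - c^2)⁻¹
      exact PowerSeries.mul_inv_cancel _ (by rw [const2 hc]; norm_num)
    exact hu.mul_left_cancel h3
  have key : A = 1 + X * (((A + A) + A)
      + (((X*c^2)*A + (X*c^2)*A) + ((X*c^2)*A + (X*c^2)*A)) + (X*c^2)^2*A) := by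
    linear_combination E2
  have e0 : (X * c^2)^0 * A = A := by rw [pow_zero, one_mul]
  have e1 : (X * c^2)^1 * A = (X*c^2)*A := by rw [pow_one]
  unfold Gf
  rw [← hA, e0, e1]
  conv_lhs => rw [key]
  rw [map_add, PowerSeries.coeff_one, if_neg (Nat.succ_ne_zero i),
    PowerSeries.coeff_succ_X_mul]
  simp only [map_add]
  ring



lemma claimA (hc : c = 1 + X * c ^ 2) (i l K : ℕ) (hK : i + 3 ≤ K) :
    (∑ k ∈ range K, Gf c (i+1) k * TT k l) = ∑ m ∈ range K, Gf c i m * NN m l := by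
  obtain ⟨K2, rfl⟩ : ∃ K2, K = K2 + 3 := ⟨K - 3, by omega⟩
  have hiK : i < K2 + 1 := by omega
  have e1 : (∑ k ∈ range (K2+3), Gf c (i+1) k * TT k l)
      = (∑ k ∈ range (K2+2), (Gf c i k * TT (k+1) l + 2 * (Gf c i (k+1) * TT (k+1) l)
          + Gf c i (k+2) * TT (k+1) l))
        + (3 * Gf c i 0 + 4 * Gf c i 1 + Gf c i 2) * TT 0 l := by
    rw [show K2+3 = (K2+2)+1 by omega, Finset.sum_range_succ']
    rw [Gf_row0 hc]
    congr 1
    apply Finset.sum_congr rfl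
    intro k _
    rw [Gf_rowk hc]; ring
  rw [e1, Finset.sum_add_distrib, Finset.sum_add_distrib]
  have e2 : ∀ m, Gf c i m * NN m l
      = Gf c i m * (R0 m * TT 0 l) + Gf c i m * TT (m+1) l
        + Gf c i m * (if 1 ≤ m then 2 * TT m l else 0)
        + Gf c i m * (if 2 ≤ m then TT (m-1) l else 0) := by
    intro m; unfold NN; ring
  rw [Finset.sum_congr rfl (fun m _ => e2 m), Finset.sum_add_distrib, Finset.sum_add_distrib,
    Finset.sum_add_distrib]
  have p1 : (∑ m ∈ range (K2+3), Gf c i m * (R0 m * TT 0 l))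
      = (3 * Gf c i 0 + 4 * Gf c i 1 + Gf c i 2) * TT 0 l := by
    have h : ∀ m, Gf c i m * (R0 m * TT 0 l)
        = (if m = 0 then Gf c i 0 * (3 * TT 0 l) else 0)
          + ((if m = 1 then Gf c i 1 * (4 * TT 0 l) else 0)
          + (if m = 2 then Gf c i 2 * (1 * TT 0 l) else 0)) := by
      intro m; unfold R0; split_ifs <;> first | (exfalso; omega) | (subst_vars; ring)
    rw [Finset.sum_congr rfl (fun m _ => h m), Finset.sum_add_distrib, Finset.sum_add_distrib,
      Finset.sum_ite_eq' (range (K2+3)) 0, Finset.sum_ite_eq' (range (K2+3)) 1,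
      Finset.sum_ite_eq' (range (K2+3)) 2,
      if_pos (Finset.mem_range.mpr (by omega)), if_pos (Finset.mem_range.mpr (by omega)),
      if_pos (Finset.mem_range.mpr (by omega))]
    ring
  have p2 : (∑ m ∈ range (K2+3), Gf c i m * TT (m+1) l)
      = ∑ k ∈ range (K2+2), Gf c i k * TT (k+1) l := by
    rw [show K2+3 = (K2+2)+1 by omega, Finset.sum_range_succ,
      Gf_zero i (K2+2) (by omega), zero_mul, add_zero]
  have p3 : (∑ m ∈ range (K2+3), Gf c i m * (if 1 ≤ m then 2 * TT m l else 0))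
      = ∑ k ∈ range (K2+2), 2 * (Gf c i (k+1) * TT (k+1) l) := by
    rw [show K2+3 = (K2+2)+1 by omega, Finset.sum_range_succ']
    rw [if_neg (by omega : ¬ (1:ℕ) ≤ 0), mul_zero, add_zero]
    apply Finset.sum_congr rfl
    intro k _
    rw [if_pos (by omega : 1 ≤ k+1)]; ring
  have p4 : (∑ m ∈ range (K2+3), Gf c i m * (if 2 ≤ m then TT (m-1) l else 0))
      = ∑ k ∈ range (K2+2), Gf c i (k+2) * TT (k+1) l := by
    have lhs : (∑ m ∈ range (K2+3), Gf c i m * (if 2 ≤ m then TT (m-1) l else 0))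
        = ∑ k ∈ range (K2+1), Gf c i (k+2) * TT (k+1) l := by
      rw [show K2+3 = (K2+2)+1 by omega, Finset.sum_range_succ']
      rw [if_neg (by omega : ¬ (2:ℕ) ≤ 0), mul_zero, add_zero]
      rw [show K2+2 = (K2+1)+1 by omega, Finset.sum_range_succ']
      rw [if_neg (by omega : ¬ (2:ℕ) ≤ 1), mul_zero, add_zero]
      apply Finset.sum_congr rfl
      intro k _
      rw [if_pos (by omega : 2 ≤ k+2), show k+1+1-1 = k+1 by omega]
    rw [lhs]
    conv_rhs => rw [show K2+2 = (K2+1)+1 by omega, Finset.sum_range_succ]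
    rw [Gf_zero i (K2+1+2) (by omega), zero_mul, add_zero]
  rw [p1, p2, p3, p4]
  ring

lemma main_ind (hc : c = 1 + X * c ^ 2) (i : ℕ) :
    ∀ j, (∑ k ∈ range (i+j+5), ∑ l ∈ range (i+j+5), Gf c i k * TT k l * Gf c j l)
      = coeff (i+j) (c * (2 - c^2)⁻¹) := by
  induction i with
  | zero =>
    intro j
    have hg : ∀ k, Gf c 0 k = if k = 0 then 1 else 0 := by
      intro k
      rcases k with _ | k
      · rw [if_pos rfl]; exact Gf_diag hc 0
      · rw [if_neg (by omega)]; exact Gf_zero 0 (k+1) (by omega)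
    calc (∑ k ∈ range (0+j+5), ∑ l ∈ range (0+j+5), Gf c 0 k * TT k l * Gf c j l)
        = ∑ k ∈ range (0+j+5),
            (if k = 0 then (∑ l ∈ range (0+j+5), TT 0 l * Gf c j l) else 0) := by
          apply Finset.sum_congr rfl
          intro k _
          rcases eq_or_ne k 0 with rfl | hk
          · rw [if_pos rfl]
            apply Finset.sum_congr rfl
            intro l _
            rw [hg 0, if_pos rfl, one_mul]
          · rw [if_neg hk]
            apply Finset.sum_eq_zero
            intro l _
            rw [hg k, if_neg hk]; ring
      _ = ∑ l ∈ range (0+j+5), TT 0 l * Gf c j l := by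
          rw [Finset.sum_ite_eq' (range (0+j+5)) 0, if_pos (Finset.mem_range.mpr (by omega))]
      _ = ∑ l ∈ range (0+j+5), (if l = 0 then Gf c j l else 0) := by
          apply Finset.sum_congr rfl
          intro l _
          rw [TT_zero_left]
          split_ifs <;> ring
      _ = Gf c j 0 := by
          rw [Finset.sum_ite_eq' (range (0+j+5)) 0, if_pos (Finset.mem_range.mpr (by omega))]
      _ = coeff (0+j) (c * (2 - c^2)⁻¹) := by
          unfold Gf
          rw [pow_zero, one_mul, Nat.zero_add]
  | succ i ih =>
    intro j
    calc (∑ k ∈ range (i+1+j+5), ∑ l ∈ range (i+1+j+5), Gf c (i+1) k * TT k l * Gf c j l)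
        = ∑ l ∈ range (i+1+j+5), ∑ k ∈ range (i+1+j+5), Gf c (i+1) k * TT k l * Gf c j l :=
          Finset.sum_comm
      _ = ∑ l ∈ range (i+1+j+5), (∑ k ∈ range (i+1+j+5), Gf c (i+1) k * TT k l) * Gf c j l := by
          apply Finset.sum_congr rfl
          intro l _
          rw [Finset.sum_mul]
      _ = ∑ l ∈ range (i+1+j+5), (∑ m ∈ range (i+1+j+5), Gf c i m * NN m l) * Gf c j l := by
          apply Finset.sum_congr rfl
          intro l _
          rw [claimA hc i l _ (by omega)]
      _ = ∑ l ∈ range (i+1+j+5), ∑ m ∈ range (i+1+j+5), (Gf c i m * NN m l) * Gf c j l := by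
          apply Finset.sum_congr rfl
          intro l _
          rw [Finset.sum_mul]
      _ = ∑ m ∈ range (i+1+j+5), ∑ l ∈ range (i+1+j+5), (Gf c i m * NN m l) * Gf c j l :=
          Finset.sum_comm
      _ = ∑ m ∈ range (i+1+j+5), (∑ l ∈ range (i+1+j+5), Gf c (j+1) l * TT l m) * Gf c i m := by
          apply Finset.sum_congr rfl
          intro m _
          rw [claimA hc j m _ (by omega), Finset.sum_mul]
          apply Finset.sum_congr rfl
          intro l _
          rw [NN_symm m l]; ring
      _ = ∑ m ∈ range (i+1+j+5), ∑ l ∈ range (i+1+j+5), Gf c i m * TT m l * Gf c (j+1) l := by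
          apply Finset.sum_congr rfl
          intro m _
          rw [Finset.sum_mul]
          apply Finset.sum_congr rfl
          intro l _
          rw [TT_symm l m]; ring
      _ = coeff (i+1+j) (c * (2 - c^2)⁻¹) := by
          rw [show i+1+j+5 = i+(j+1)+5 by omega, ih (j+1), show i+(j+1) = i+1+j by omega]

lemma ext_double (i j : ℕ) {K L K' L' : ℕ} (h1 : i < K) (h2 : j < L) (h3 : i < K') (h4 : j < L') :
    (∑ k ∈ range K, ∑ l ∈ range L, Gf c i k * TT k l * Gf c j l)
      = ∑ k ∈ range K', ∑ l ∈ range L', Gf c i k * TT k l * Gf c j l := by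
  suffices H : ∀ K L, i < K → j < L →
      (∑ k ∈ range K, ∑ l ∈ range L, Gf c i k * TT k l * Gf c j l)
        = ∑ k ∈ range (i+1), ∑ l ∈ range (j+1), Gf c i k * TT k l * Gf c j l by
    rw [H K L h1 h2, H K' L' h3 h4]
  intro K L hK hL
  have inner : ∀ k, (∑ l ∈ range L, Gf c i k * TT k l * Gf c j l)
      = ∑ l ∈ range (j+1), Gf c i k * TT k l * Gf c j l := by
    intro k
    refine (Finset.sum_subset (Finset.range_subset_range.mpr hL) ?_).symm
    intro l _ hl
    have hjl : ¬ l < j + 1 := fun h => hl (Finset.mem_range.mpr h)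
    rw [Gf_zero j l (by omega), mul_zero]
  rw [Finset.sum_congr rfl (fun k _ => inner k)]
  refine (Finset.sum_subset (Finset.range_subset_range.mpr hK) ?_).symm
  intro k _ hk
  have hik : ¬ k < i + 1 := fun h => hk (Finset.mem_range.mpr h)
  apply Finset.sum_eq_zero
  intro l _
  rw [Gf_zero i k (by omega)]
  ring


noncomputable def dd : ℕ → ℚ := fun m => hankelB m / hankelB (m-1)

noncomputable def LL : ℕ → ℕ → ℚ := fun k m =>
  (if m = k then 1 else 0) + (if m = k - 1 ∧ 2 ≤ k then hankelB (k-2) / hankelB (k-1) else 0)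

lemma LL_eq (a b : ℕ) : LL a b
    = (if b = a then 1 else 0)
      + (if b = a - 1 ∧ 2 ≤ a then hankelB (a-2) / hankelB (a-1) else 0) := rfl

lemma tldl_scalar (k l : ℕ) :
    dd k * LL l k + (if 2 ≤ k then (hankelB (k-2)/hankelB (k-1)) * (dd (k-1) * LL l (k-1)) else 0)
      = TT k l := by
  rcases (by omega : k = l ∨ k = l + 1 ∨ l = k + 1 ∨ (k ≠ l ∧ k ≠ l + 1 ∧ l ≠ k + 1)) with
    rfl | hkl | hkl | ⟨h1, h2, h3⟩
  · -- diagonal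
    rcases (by omega : k = 0 ∨ k = 1 ∨ 2 ≤ k) with rfl | rfl | hk2
    · norm_num [LL, dd, TT, hankelB]
    · norm_num [LL, dd, TT, hankelB]
    obtain ⟨t, rfl⟩ : ∃ t, k = t + 2 := ⟨k - 2, by omega⟩
    rw [TT_eq_diag _ _ rfl (by omega), if_pos (by omega : 2 ≤ t + 2)]
    rw [LL_eq, LL_eq, if_pos rfl, if_neg (by omega : ¬(t+2 = t+2-1 ∧ 2 ≤ t+2)),
      if_neg (by omega : ¬ t+2-1 = t+2), if_pos (by omega : t+2-1 = t+2-1 ∧ 2 ≤ t+2)]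
    unfold dd
    rw [show t+2-1 = t+1 from rfl, show t+2-2 = t from rfl, show t+1-1 = t from rfl,
      hankelB_rec t]
    have h0 := hankelB_ne t
    have h1 := hankelB_ne (t+1)
    field_simp
    ring
  · -- k = l + 1
    subst hkl
    rcases (by omega : l = 0 ∨ 1 ≤ l) with rfl | hl1
    · norm_num [LL, dd, TT, hankelB]
    rw [TT_eq_down _ _ rfl hl1, if_pos (by omega : 2 ≤ l + 1)]
    rw [LL_eq, LL_eq, if_neg (by omega : ¬ l+1 = l), if_neg (by omega : ¬(l+1 = l-1 ∧ 2 ≤ l)),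
      if_pos (by omega : l+1-1 = l), show l+1-1 = l from rfl,
      if_neg (by omega : ¬(l = l - 1 ∧ 2 ≤ l))]
    unfold dd
    rw [show l+1-1 = l from rfl, show l+1-2 = l-1 from rfl]
    have h0 := hankelB_ne l
    have h1 := hankelB_ne (l-1)
    field_simp
    ring
  · -- l = k + 1
    subst hkl
    rcases (by omega : k = 0 ∨ 1 ≤ k) with rfl | hk1
    · norm_num [LL, dd, TT, hankelB]
    rw [TT_eq_up _ _ rfl hk1]
    rw [LL_eq, LL_eq, if_neg (by omega : ¬ k = k+1), if_pos (by omega : k = k+1-1 ∧ 2 ≤ k+1),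
      if_neg (by omega : ¬ k-1 = k+1), if_neg (by omega : ¬(k-1 = k+1-1 ∧ 2 ≤ k+1))]
    unfold dd
    rw [show k+1-1 = k from rfl, show k+1-2 = k-1 from rfl]
    have h0 := hankelB_ne k
    have h1 := hankelB_ne (k-1)
    rw [add_zero, mul_zero, mul_zero]
    split_ifs
    · field_simp
      ring
    · field_simp
      ring
  · -- far apart
    rw [TT_far k l h1 h2 h3]
    rw [LL_eq, LL_eq, if_neg (by omega : ¬ k = l), if_neg (by omega : ¬(k = l - 1 ∧ 2 ≤ l)),
      if_neg (by omega : ¬ k-1 = l), if_neg (by omega : ¬(k-1 = l-1 ∧ 2 ≤ l))]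
    split_ifs <;> ring

lemma tldl (k l M : ℕ) (hk : k < M) (hl : l < M) :
    (∑ m ∈ range M, (LL k m * dd m) * LL l m) = TT k l := by
  calc (∑ m ∈ range M, (LL k m * dd m) * LL l m)
      = ∑ m ∈ range M, ((if m = k then dd m * LL l m else 0)
          + (if m = k - 1 ∧ 2 ≤ k then (hankelB (k-2)/hankelB (k-1)) * (dd m * LL l m) else 0)) := by
        apply Finset.sum_congr rfl
        intro m _
        rw [LL_eq k m]
        split_ifs <;> ring
    _ = dd k * LL l k
        + ∑ m ∈ range M, (if m = k - 1 ∧ 2 ≤ k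
            then (hankelB (k-2)/hankelB (k-1)) * (dd m * LL l m) else 0) := by
        rw [Finset.sum_add_distrib, Finset.sum_ite_eq' (range M) k,
          if_pos (Finset.mem_range.mpr hk)]
    _ = dd k * LL l k
        + (if 2 ≤ k then (hankelB (k-2)/hankelB (k-1)) * (dd (k-1) * LL l (k-1)) else 0) := by
        congr 1
        by_cases h2 : 2 ≤ k
        · rw [if_pos h2]
          have : ∀ m, (if m = k - 1 ∧ 2 ≤ k
              then (hankelB (k-2)/hankelB (k-1)) * (dd m * LL l m) else 0)
              = (if m = k - 1 then (hankelB (k-2)/hankelB (k-1)) * (dd m * LL l m) else 0) := by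
            intro m
            split_ifs <;> first | rfl | (exfalso; omega)
          rw [Finset.sum_congr rfl (fun m _ => this m), Finset.sum_ite_eq' (range M) (k-1),
            if_pos (Finset.mem_range.mpr (by omega))]
        · rw [if_neg h2]
          apply Finset.sum_eq_zero
          intro m _
          rw [if_neg (by omega)]
    _ = TT k l := tldl_scalar k l

lemma prod_dd (n : ℕ) : (∏ m ∈ range (n+1), dd m) = hankelB n := by
  induction n with
  | zero => norm_num [dd, hankelB]
  | succ n ih =>
    rw [Finset.prod_range_succ, ih]
    unfold dd
    rw [show n+1-1 = n from rfl]
    field_simp [hankelB_ne n]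


end Stmt17

open Stmt17 Matrix in
/-- Let `c` be the Catalan series (`c = 1 + Xc²`) and let
`a(n) = [X^n](c·(2-c²)⁻¹)` be the row sums of the Riordan array `(c, c²-1)`. Then the Hankel
transform of `a` is the sequence `b` with `b(0)=1`, `b(1)=4`, `b(n+2)=4b(n+1)-b(n)`:
for every `n`, `det((a(i+j))_{0≤i,j≤n}) = b(n)`. -/
theorem stmt_17 (c : PowerSeries ℚ)
    (hc : c = 1 + PowerSeries.X * c ^ 2) (n : ℕ) :
    Matrix.det (Matrix.of fun i j : Fin (n + 1) =>
      PowerSeries.coeff (R := ℚ) (i.1 + j.1) (c * (2 - c ^ 2)⁻¹)) = hankelB n := by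
  classical
  set GM : Matrix (Fin (n+1)) (Fin (n+1)) ℚ := Matrix.of fun i k => Gf c i.1 k.1 with hGM
  set TM : Matrix (Fin (n+1)) (Fin (n+1)) ℚ := Matrix.of fun k l => TT k.1 l.1 with hTMdef
  set LM : Matrix (Fin (n+1)) (Fin (n+1)) ℚ := Matrix.of fun k m => LL k.1 m.1 with hLM
  set DM : Matrix (Fin (n+1)) (Fin (n+1)) ℚ := Matrix.diagonal (fun m => dd m.1) with hDM
  have hTM : LM * DM * LMᵀ = TM := by
    ext k l
    have e : (LM * DM * LMᵀ) k l = ∑ m : Fin (n+1), (LL k.1 m.1 * dd m.1) * LL l.1 m.1 := by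
      rw [Matrix.mul_apply]
      apply Finset.sum_congr rfl
      intro m _
      rw [Matrix.mul_diagonal, Matrix.transpose_apply, hLM]
      simp [Matrix.of_apply]
    rw [e, Fin.sum_univ_eq_sum_range (fun m => (LL k.1 m * dd m) * LL l.1 m) (n+1),
      tldl k.1 l.1 (n+1) k.isLt l.isLt]
    simp [hTMdef]
  have hH : (Matrix.of fun i j : Fin (n + 1) =>
      PowerSeries.coeff (R := ℚ) (i.1 + j.1) (c * (2 - c ^ 2)⁻¹)) = GM * TM * GMᵀ := by
    ext i j
    simp only [Matrix.mul_apply, Matrix.transpose_apply, hGM, hTMdef, Matrix.of_apply]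
    calc PowerSeries.coeff (R := ℚ) (i.1 + j.1) (c * (2 - c ^ 2)⁻¹)
        = ∑ k ∈ Finset.range (i.1+j.1+5), ∑ l ∈ Finset.range (i.1+j.1+5),
            Gf c i.1 k * TT k l * Gf c j.1 l := (main_ind hc i.1 j.1).symm
      _ = ∑ k ∈ Finset.range (n+1), ∑ l ∈ Finset.range (n+1),
            Gf c i.1 k * TT k l * Gf c j.1 l :=
          ext_double i.1 j.1 (by omega) (by omega) i.isLt j.isLt
      _ = ∑ k : Fin (n+1), ∑ l ∈ Finset.range (n+1), Gf c i.1 k.1 * TT k.1 l * Gf c j.1 l :=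
          (Fin.sum_univ_eq_sum_range
            (fun k => ∑ l ∈ Finset.range (n+1), Gf c i.1 k * TT k l * Gf c j.1 l) (n+1)).symm
      _ = ∑ k : Fin (n+1), ∑ l : Fin (n+1), Gf c i.1 k.1 * TT k.1 l.1 * Gf c j.1 l.1 := by
          apply Finset.sum_congr rfl
          intro k _
          exact (Fin.sum_univ_eq_sum_range (fun l => Gf c i.1 k.1 * TT k.1 l * Gf c j.1 l)
            (n+1)).symm
      _ = ∑ l : Fin (n+1), ∑ k : Fin (n+1), Gf c i.1 k.1 * TT k.1 l.1 * Gf c j.1 l.1 :=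
          Finset.sum_comm
      _ = ∑ l : Fin (n+1), (∑ k : Fin (n+1), Gf c i.1 k.1 * TT k.1 l.1) * Gf c j.1 l.1 := by
          apply Finset.sum_congr rfl
          intro l _
          rw [Finset.sum_mul]
  have hdetG : GM.det = 1 := by
    rw [Matrix.det_of_lowerTriangular GM (by
      intro i j hij
      show Gf c i.1 j.1 = 0
      exact Gf_zero i.1 j.1 hij)]
    apply Finset.prod_eq_one
    intro i _
    show Gf c i.1 i.1 = 1
    exact Gf_diag hc i.1
  have hdetL : LM.det = 1 := by
    rw [Matrix.det_of_lowerTriangular LM (by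
      intro k m hkm
      show LL k.1 m.1 = 0
      have : (k:ℕ) < m.1 := hkm
      rw [LL_eq, if_neg (by omega), if_neg (by omega)]
      norm_num)]
    apply Finset.prod_eq_one
    intro k _
    show LL k.1 k.1 = 1
    rw [LL_eq, if_pos rfl, if_neg (by omega)]
    norm_num
  have hdetD : DM.det = hankelB n := by
    rw [hDM, Matrix.det_diagonal,
      Fin.prod_univ_eq_prod_range (fun m => dd m) (n+1), prod_dd n]
  rw [hH, ← hTM, Matrix.det_mul, Matrix.det_mul, Matrix.det_mul, Matrix.det_mul,
    Matrix.det_transpose, Matrix.det_transpose, hdetG, hdetL, hdetD]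
  ring
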